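/- A single-input function f : ℕ → ℕ is obliviously-computable if and only if f is semilinear and nondecreasing. -/

import Mathlib

/-- A chemical reaction network with species type `σ`, designated input species
`inputs i` for each of the `d` inputs, an output species, and a leader species. -/
structure CRN (d : ℕ) (σ : Type) [Fintype σ] [DecidableEq σ] where
  /-- Each reaction is a pair `(r, p)` of reactant counts and product counts. -/
  reactions : Finset ((σ → ℕ) × (σ → ℕ))
  inputs : Fin d → σ
  output : σ
  leader : σ
  inputs_inj : Function.Injective inputs
  leader_not_input : ∀ i, inputs i ≠ leader

namespace CRN

variable {d : ℕ} {σ : Type} [Fintype σ] [DecidableEq σ]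

/-- One reaction step: some reaction `(r, p)` with `r ≤ c` pointwise fires,
yielding `c - r + p`. -/
def Step (C : CRN d σ) (c c' : σ → ℕ) : Prop :=
  ∃ rp ∈ C.reactions, rp.1 ≤ c ∧ c' = c - rp.1 + rp.2

/-- Reachability by a finite sequence of reaction steps. -/
def Reachable (C : CRN d σ) : (σ → ℕ) → (σ → ℕ) → Prop :=
  Relation.ReflTransGen C.Step

/-- The initial configuration encoding input `x`: count `x i` of input species
`inputs i`, count 1 of the leader, count 0 of everything else. -/
def init (C : CRN d σ) (x : Fin d → ℕ) : σ → ℕ :=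
  fun s => (∑ i, if C.inputs i = s then x i else 0) + (if s = C.leader then 1 else 0)

/-- A configuration is stable if the output count never changes from it. -/
def Stable (C : CRN d σ) (c : σ → ℕ) : Prop :=
  ∀ c', C.Reachable c c' → c' C.output = c C.output

/-- `C` stably computes `f` if from every configuration reachable from an initial
configuration, a stable configuration with correct output count is reachable. -/
def StablyComputes (C : CRN d σ) (f : (Fin d → ℕ) → ℕ) : Prop :=
  ∀ x c, C.Reachable (C.init x) c →
    ∃ o, C.Reachable c o ∧ C.Stable o ∧ o C.output = f x

/-- A CRN is output-oblivious if the output species is never a reactant. -/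
def OutputOblivious (C : CRN d σ) : Prop :=
  ∀ rp ∈ C.reactions, rp.1 C.output = 0

/-- A CRN is output-monotonic if no reaction decreases the output species count. -/
def OutputMonotonic (C : CRN d σ) : Prop :=
  ∀ rp ∈ C.reactions, rp.1 C.output ≤ rp.2 C.output

end CRN

/-- `f` is obliviously-computable if some output-oblivious CRN stably computes it. -/
def ObliviouslyComputable {d : ℕ} (f : (Fin d → ℕ) → ℕ) : Prop :=
  ∃ (n : ℕ) (C : CRN d (Fin n)), C.OutputOblivious ∧ C.StablyComputes f

/-- Semilinear subsets of `ℕ^d`: finite Boolean combinations of threshold sets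
`{x : a·x ≥ b}` and mod sets `{x : a·x ≡ b (mod c)}`. -/
inductive SemilinearSet (d : ℕ) : Set (Fin d → ℕ) → Prop
  | threshold (a : Fin d → ℤ) (b : ℤ) :
      SemilinearSet d {x | b ≤ ∑ i, a i * (x i : ℤ)}
  | mod (a : Fin d → ℤ) (b : ℤ) (c : ℕ) (hc : 0 < c) :
      SemilinearSet d {x | (∑ i, a i * (x i : ℤ)) ≡ b [ZMOD (c : ℤ)]}
  | union {A B : Set (Fin d → ℕ)} :
      SemilinearSet d A → SemilinearSet d B → SemilinearSet d (A ∪ B)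
  | inter {A B : Set (Fin d → ℕ)} :
      SemilinearSet d A → SemilinearSet d B → SemilinearSet d (A ∩ B)
  | compl {A : Set (Fin d → ℕ)} :
      SemilinearSet d A → SemilinearSet d Aᶜ

/-- A function `f : ℕ^d → ℕ` is semilinear if it is a finite union of (rational)
affine partial functions whose domains are disjoint semilinear sets covering `ℕ^d`. -/
def SemilinearFn {d : ℕ} (f : (Fin d → ℕ) → ℕ) : Prop :=
  ∃ (m : ℕ) (dom : Fin m → Set (Fin d → ℕ))
    (grad : Fin m → Fin d → ℚ) (b : Fin m → ℚ),
    (∀ k, SemilinearSet d (dom k)) ∧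
    (∀ k l, k ≠ l → dom k ∩ dom l = ∅) ∧
    (∀ x, ∃ k, x ∈ dom k) ∧
    (∀ k, ∀ x ∈ dom k, (f x : ℚ) = (∑ i, grad k i * (x i : ℚ)) + b k)

section Basic

namespace CRN

variable {d : ℕ} {σ : Type} [Fintype σ] [DecidableEq σ] (C : CRN d σ)

theorem step_add {c c' v : σ → ℕ} (h : C.Step c c') : C.Step (c + v) (c' + v) := by
  obtain ⟨rp, hmem, hle, heq⟩ := h
  refine ⟨rp, hmem, fun t => le_trans (hle t) (by simp), ?_⟩
  funext t
  have h2 : rp.1 t ≤ c t := hle t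
  simp only [heq, Pi.add_apply, Pi.sub_apply]
  omega

theorem reach_add {c c' : σ → ℕ} (h : C.Reachable c c') (v : σ → ℕ) :
    C.Reachable (c + v) (c' + v) := by
  induction h with
  | refl => exact Relation.ReflTransGen.refl
  | tail _ hstep ih => exact ih.tail (C.step_add hstep)

theorem step_output_le {c c' : σ → ℕ} (hOb : C.OutputOblivious) (h : C.Step c c') :
    c C.output ≤ c' C.output := by
  obtain ⟨rp, hmem, hle, heq⟩ := h
  have h0 := hOb rp hmem
  simp only [heq, Pi.add_apply, Pi.sub_apply, h0]
  omega

theorem reach_output_le {c c' : σ → ℕ} (hOb : C.OutputOblivious) (h : C.Reachable c c') :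
    c C.output ≤ c' C.output := by
  induction h with
  | refl => exact le_refl _
  | tail _ hstep ih => exact le_trans ih (C.step_output_le hOb hstep)

/-- unstable configurations are upward closed (oblivious case) -/
theorem unstable_add {c v : σ → ℕ} (hOb : C.OutputOblivious) (h : ¬ C.Stable c) :
    ¬ C.Stable (c + v) := by
  simp only [Stable, not_forall] at h ⊢
  obtain ⟨c', hr, hne⟩ := h
  refine ⟨c' + v, C.reach_add hr v, ?_⟩
  have := C.reach_output_le hOb hr
  simp only [Pi.add_apply]
  omega

end CRN

end Basic
set_option linter.unusedSectionVars false

section Chain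

variable {σ : Type} [Fintype σ] [DecidableEq σ]

/-- `k` copies of species `s0`. -/
def uv (s0 : σ) (k : ℕ) : σ → ℕ := fun s => if s = s0 then k else 0

theorem uv_add (s0 : σ) (a b : ℕ) : uv s0 a + uv s0 b = uv s0 (a + b) := by
  funext s; simp only [uv, Pi.add_apply]; split_ifs <;> omega

theorem uv_zero (s0 : σ) (c : σ → ℕ) : c + uv s0 0 = c := by
  funext s; simp [uv]

variable {C : CRN 1 σ} {f : ℕ → ℕ}

theorem init_add (n k : ℕ) :
    C.init (fun _ => n + k) = C.init (fun _ => n) + uv (C.inputs 0) k := by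
  funext s
  simp only [CRN.init, Fin.sum_univ_one, uv, Pi.add_apply]
  split_ifs with h1 h2 <;> simp_all <;> omega

theorem stable_out (hSC : C.StablyComputes (fun x => f (x 0))) {x : ℕ} {o : σ → ℕ}
    (ho : C.Stable o)
    (hr : C.Reachable (C.init (fun _ => x)) o) : o C.output = f x := by
  obtain ⟨o', hro', hso', hout⟩ := hSC (fun _ => x) o hr
  have h5 : o' C.output = f x := hout
  rw [← h5]
  exact (ho o' hro').symm

theorem chain_hr (x : ℕ) {c : σ → ℕ} (h : C.Reachable (C.init (fun _ => x)) c) :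
    C.Reachable (C.init (fun _ => x + 1)) (c + uv (C.inputs 0) 1) := by
  rw [init_add x 1]
  exact C.reach_add h _

variable (hSC : C.StablyComputes (fun x => f (x 0)))
include hSC

/-- The canonical chain of stable configurations: `chain x` is stable, reachable from
`init x`, and `chain (x+1)` is reachable from `chain x` plus one extra input token. -/
noncomputable def chain : (x : ℕ) → {c : σ → ℕ // C.Reachable (C.init (fun _ => x)) c ∧ C.Stable c}
  | 0 => ⟨(hSC (fun _ => 0) (C.init (fun _ => 0)) Relation.ReflTransGen.refl).choose,
      (hSC (fun _ => 0) (C.init (fun _ => 0)) Relation.ReflTransGen.refl).choose_spec.1,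
      (hSC (fun _ => 0) (C.init (fun _ => 0)) Relation.ReflTransGen.refl).choose_spec.2.1⟩
  | (x + 1) =>
    ⟨(hSC (fun _ => x + 1) _ (chain_hr x (chain x).2.1)).choose,
      (chain_hr x (chain x).2.1).trans
        (hSC (fun _ => x + 1) _ (chain_hr x (chain x).2.1)).choose_spec.1,
      (hSC (fun _ => x + 1) _ (chain_hr x (chain x).2.1)).choose_spec.2.1⟩

theorem chain_succ (x : ℕ) :
    C.Reachable ((chain hSC x).1 + uv (C.inputs 0) 1) ((chain hSC (x + 1)).1) :=
  (hSC (fun _ => x + 1) _ (chain_hr x (chain hSC x).2.1)).choose_spec.1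

theorem chain_out (x : ℕ) : (chain hSC x).1 C.output = f x :=
  stable_out hSC (chain hSC x).2.2 (chain hSC x).2.1

theorem chain_reach_add (x t : ℕ) :
    C.Reachable ((chain hSC x).1 + uv (C.inputs 0) t) ((chain hSC (x + t)).1) := by
  induction t generalizing x with
  | zero => rw [uv_zero]; exact Relation.ReflTransGen.refl
  | succ t ih =>
    have e1 : (chain hSC x).1 + uv (C.inputs 0) (t + 1) =
        ((chain hSC x).1 + uv (C.inputs 0) 1) + uv (C.inputs 0) t := by
      rw [add_assoc, uv_add, Nat.add_comm 1 t]
    rw [e1]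
    have h2 := C.reach_add (chain_succ hSC x) (uv (C.inputs 0) t)
    have h3 := ih (x + 1)
    have e2 : x + 1 + t = x + (t + 1) := by omega
    rw [e2] at h3
    exact h2.trans h3

theorem f_mono (hOb : C.OutputOblivious) : Monotone f := by
  have h1 : ∀ x, f x ≤ f (x + 1) := by
    intro x
    have h2 := chain_succ hSC x
    have h3 := C.reach_output_le hOb h2
    have h4 : (chain hSC x).1 C.output ≤ ((chain hSC x).1 + uv (C.inputs 0) 1) C.output := by
      simp [Pi.add_apply]
    have e1 := chain_out hSC x
    have e2 := chain_out hSC (x + 1)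
    omega
  intro a b hab
  induction b with
  | zero => simp_all
  | succ b ih =>
    rcases Nat.lt_or_ge a (b + 1) with h | h
    · exact le_trans (ih (by omega)) (h1 b)
    · have : a = b + 1 := by omega
      simp [this]

end Chain
section Saturation

variable {σ : Type} [Fintype σ] [DecidableEq σ] {C : CRN 1 σ}

theorem exists_saturation_bound (hOb : C.OutputOblivious) :
    ∃ B : ℕ, ∀ c v : σ → ℕ, C.Stable c → (∀ t, v t ≠ 0 → B ≤ c t) → C.Stable (c + v) := by
  classical
  set U : Set (σ → ℕ) := {c | ¬ C.Stable c} with hU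
  set M : Set (σ → ℕ) := {u | u ∈ U ∧ ∀ u' ∈ U, u' ≤ u → u' = u} with hM
  have hanti : IsAntichain (· ≤ ·) M := by
    intro a ha b hb hne hle
    exact hne (hb.2 a ha.1 hle)
  have hpwo : Set.IsPWO M :=
    Set.isPWO_of_wellQuasiOrderedLE M
  have hMfin : M.Finite := hanti.finite_of_partiallyWellOrderedOn hpwo
  have hdom : ∀ c ∈ U, ∃ u ∈ M, u ≤ c := by
    have key : ∀ n : ℕ, ∀ c ∈ U, (∑ t, c t) = n → ∃ u ∈ M, u ≤ c := by
      intro n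
      induction n using Nat.strong_induction_on with
      | _ n ih =>
        intro c hc hsum
        by_cases hmin : ∀ u' ∈ U, u' ≤ c → u' = c
        · exact ⟨c, ⟨hc, hmin⟩, le_refl c⟩
        · push_neg at hmin
          obtain ⟨u', hu'U, hu'le, hu'ne⟩ := hmin
          have hlt : (∑ t, u' t) < ∑ t, c t := by
            apply Finset.sum_lt_sum (fun i _ => hu'le i)
            by_contra hno
            push_neg at hno
            exact hu'ne (funext fun t => le_antisymm (hu'le t) (hno t (Finset.mem_univ t)))
          obtain ⟨u, huM, hule⟩ := ih _ (hsum ▸ hlt) u' hu'U rfl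
          exact ⟨u, huM, le_trans hule hu'le⟩
    intro c hc
    exact key _ c hc rfl
  refine ⟨(hMfin.toFinset.sup fun u => Finset.univ.sup u) + 1, ?_⟩
  intro c v hst hsat
  by_contra hunst
  obtain ⟨u, huM, hule⟩ := hdom (c + v) hunst
  have hnotle : ¬ u ≤ c := by
    intro hle
    have : c = u + (c - u) := by funext t; have h9 : u t ≤ c t := hle t; simp only [Pi.add_apply, Pi.sub_apply]; omega
    rw [this] at hst
    exact C.unstable_add hOb huM.1 hst
  obtain ⟨t, hct⟩ : ∃ t, c t < u t := by
    by_contra hno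
    push_neg at hno
    exact hnotle (by intro t; exact hno t)
  have hvt : v t ≠ 0 := by
    have h8 : u t ≤ c t + v t := hule t
    omega
  have hB := hsat t hvt
  have hut : u t ≤ hMfin.toFinset.sup fun u => Finset.univ.sup u := by
    calc u t ≤ Finset.univ.sup u := Finset.le_sup (Finset.mem_univ t)
    _ ≤ _ := Finset.le_sup (hMfin.mem_toFinset.mpr huM)
  omega

end Saturation
section Pump

theorem nat_seq_bdd_max (h : ℕ → ℕ) (M : ℕ) (hb : ∀ k, h k ≤ M) : ∃ K, ∀ k, h k ≤ h K := by
  by_contra hno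
  push_neg at hno
  have grow : ∀ j, ∃ k, j ≤ h k := by
    intro j
    induction j with
    | zero => exact ⟨0, Nat.zero_le _⟩
    | succ j ih =>
      obtain ⟨k, hk⟩ := ih
      obtain ⟨k', hk'⟩ := hno k
      exact ⟨k', by omega⟩
  obtain ⟨k, hk⟩ := grow (M + 1)
  have := hb k
  omega

theorem mono_bdd_ev_const (h : ℕ → ℕ) (hm : ∀ k l, k ≤ l → h k ≤ h l) (M : ℕ)
    (hb : ∀ k, h k ≤ M) : ∃ K, ∀ k, K ≤ k → h k = h K := by
  obtain ⟨K, hK⟩ := nat_seq_bdd_max h M hb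
  exact ⟨K, fun k hk => le_antisymm (hK k) (hm K k hk)⟩

variable {σ : Type} [Fintype σ] [DecidableEq σ] {C : CRN 1 σ} {f : ℕ → ℕ}

theorem forward_normal (hOb : C.OutputOblivious) (hSC : C.StablyComputes (fun x => f (x 0))) :
    ∃ N Δ s : ℕ, 0 < Δ ∧ ∀ x, N ≤ x → f (x + Δ) = f x + s := by
  classical
  obtain ⟨B, hB⟩ := exists_saturation_bound hOb
  set X := C.inputs 0 with hX
  set o : ℕ → (σ → ℕ) := fun x => (chain hSC x).1 with ho
  have ho_reach : ∀ x, C.Reachable (C.init (fun _ => x)) (o x) := fun x => (chain hSC x).2.1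
  have ho_st : ∀ x, C.Stable (o x) := fun x => (chain hSC x).2.2
  have ho_out : ∀ x, o x C.output = f x := fun x => chain_out hSC x
  have ho_add : ∀ x t, C.Reachable (o x + uv X t) (o (x + t)) := fun x t => chain_reach_add hSC x t
  have hpwo : Set.IsPWO (Set.univ : Set (σ → ℕ)) :=
    Set.isPWO_of_wellQuasiOrderedLE _
  obtain ⟨g, hg⟩ := hpwo.exists_monotone_subseq (f := o) (fun n => Set.mem_univ _)
  have dich : ∀ t : σ, ∃ i : ℕ,
      (∀ j, i ≤ j → o (g j) t = o (g i) t) ∨ (∀ j, i ≤ j → B ≤ o (g j) t) := by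
    intro t
    by_cases hbd : ∃ M, ∀ j, o (g j) t ≤ M
    · obtain ⟨M, hM⟩ := hbd
      have hm : ∀ k l, k ≤ l → o (g k) t ≤ o (g l) t := by
        intro k l hkl
        have h7 : o (g k) ≤ o (g l) := hg hkl
        exact h7 t
      obtain ⟨K, hK⟩ := mono_bdd_ev_const (fun j => o (g j) t) hm M hM
      exact ⟨K, Or.inl hK⟩
    · push_neg at hbd
      obtain ⟨i, hi⟩ := hbd B
      refine ⟨i, Or.inr fun j hj => ?_⟩
      have h7 : o (g i) ≤ o (g j) := hg hj
      have h8 : o (g i) t ≤ o (g j) t := h7 t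
      omega
  choose idx hidx using dich
  have main : ∃ x1 x2 : ℕ, x1 < x2 ∧ o x1 ≤ o x2 ∧
      ∀ t, o x1 t ≠ o x2 t → B ≤ o x2 t := by
    refine ⟨g (Finset.univ.sup idx), g (Finset.univ.sup idx + 1),
      g.strictMono (by omega), hg (by omega), ?_⟩
    intro t hne
    rcases hidx t with hconst | hbig
    · exfalso
      have hle1 : idx t ≤ Finset.univ.sup idx := Finset.le_sup (Finset.mem_univ t)
      have e1 := hconst (Finset.univ.sup idx) hle1
      have e2 := hconst (Finset.univ.sup idx + 1) (by omega)
      omega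
    · exact hbig (Finset.univ.sup idx + 1)
        (le_trans (Finset.le_sup (Finset.mem_univ t)) (by omega))
  obtain ⟨x1, x2, hx12, hmono12, hsat0⟩ := main
  obtain ⟨Δ, hΔdef⟩ : ∃ D : ℕ, D = x2 - x1 := ⟨_, rfl⟩
  have hΔ : 0 < Δ := by omega
  have hx1Δ : x1 + Δ = x2 := by omega
  obtain ⟨w, hwdef⟩ : ∃ w' : σ → ℕ, w' = o x2 - o x1 := ⟨_, rfl⟩
  have hw : ∀ t, o x1 t + w t = o x2 t := by
    intro t
    have h7 : o x1 t ≤ o x2 t := hmono12 t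
    rw [hwdef]
    simp only [Pi.sub_apply]
    omega
  have hwfun : o x1 + w = o x2 := funext hw
  obtain ⟨wm, hwm⟩ : ∃ wmf : ℕ → (σ → ℕ), ∀ k t, wmf k t = k * w t :=
    ⟨fun k t => k * w t, fun _ _ => rfl⟩
  have hwm_succ : ∀ k, wm (k + 1) = wm k + w := by
    intro k
    funext t
    rw [Pi.add_apply, hwm, hwm]
    exact Nat.succ_mul k (w t)
  have hsat : ∀ t, w t ≠ 0 → B ≤ o x2 t := by
    intro t hwt
    apply hsat0 t
    have := hw t
    omega
  have hπ : C.Reachable (o x1 + uv X Δ) (o x2) := by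
    have h7 := ho_add x1 Δ
    rw [hx1Δ] at h7
    exact h7
  have hpump : ∀ k, C.Reachable (o x2 + uv X (k * Δ)) (o x2 + wm k) := by
    intro k
    induction k with
    | zero =>
      have e : o x2 + wm 0 = o x2 + uv X (0 * Δ) := by
        funext t
        simp [hwm, uv]
      rw [e]
      exact Relation.ReflTransGen.refl
    | succ k ih =>
      have e1 : o x2 + uv X ((k + 1) * Δ) = (o x2 + uv X (k * Δ)) + uv X Δ := by
        have e0 : (k + 1) * Δ = k * Δ + Δ := by ring
        rw [e0, ← uv_add, add_assoc]
      have step1 : C.Reachable ((o x2 + uv X (k * Δ)) + uv X Δ)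
          ((o x2 + wm k) + uv X Δ) := C.reach_add ih _
      have e2 : (o x2 + wm k) + uv X Δ = (o x1 + uv X Δ) + wm (k + 1) := by
        rw [hwm_succ, ← hwfun]
        abel
      have step2 : C.Reachable ((o x1 + uv X Δ) + wm (k + 1))
          (o x2 + wm (k + 1)) := C.reach_add hπ _
      rw [← e2] at step2
      rw [e1]
      exact step1.trans step2
  have hstable : ∀ k, C.Stable (o x2 + wm k) := by
    intro k
    apply hB _ _ (ho_st x2)
    intro t hvt
    apply hsat t
    rw [hwm] at hvt
    intro h0
    rw [h0] at hvt
    omega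
  have hreach0 : ∀ k, C.Reachable (C.init (fun _ => x2 + k * Δ)) (o x2 + wm k) := by
    intro k
    rw [init_add x2 (k * Δ), ← hX]
    exact (C.reach_add (ho_reach x2) _).trans (hpump k)
  obtain ⟨s, hs⟩ : ∃ s' : ℕ, s' = w C.output := ⟨_, rfl⟩
  have hexact : ∀ k, f (x2 + k * Δ) = f x2 + k * s := by
    intro k
    have h7 := stable_out hSC (hstable k) (hreach0 k)
    have h8 : (o x2 + wm k) C.output = f x2 + k * s := by
      rw [Pi.add_apply, hwm, ho_out x2, hs]
    rw [← h7]
    exact h8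
  have hlow : ∀ t k, f (x2 + t) + k * s ≤ f (x2 + t + k * Δ) := by
    intro t k
    have e0 : (fun _ : Fin 1 => x2 + t + k * Δ) = (fun _ : Fin 1 => x2 + (t + k * Δ)) := by
      funext u
      ring_nf
    have r1 : C.Reachable (C.init (fun _ => x2 + t + k * Δ)) (o (x2 + t) + wm k) := by
      rw [e0, init_add x2 (t + k * Δ), ← hX]
      have s1 : C.Reachable (C.init (fun _ => x2) + uv X (t + k * Δ))
          (o x2 + uv X (t + k * Δ)) := C.reach_add (ho_reach x2) _
      have e1 : o x2 + uv X (t + k * Δ) = (o x2 + uv X (k * Δ)) + uv X t := by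
        rw [add_assoc, uv_add, Nat.add_comm (k * Δ) t]
      have s2 : C.Reachable ((o x2 + uv X (k * Δ)) + uv X t)
          ((o x2 + wm k) + uv X t) := C.reach_add (hpump k) _
      rw [← e1] at s2
      have e2 : (o x2 + wm k) + uv X t = (o x2 + uv X t) + wm k := by abel
      rw [e2] at s2
      have s3 : C.Reachable ((o x2 + uv X t) + wm k)
          (o (x2 + t) + wm k) := C.reach_add (ho_add x2 t) _
      exact s1.trans (s2.trans s3)
    obtain ⟨ofin, hro, hso, hout⟩ := hSC _ _ r1
    have hge := C.reach_output_le hOb hro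
    have hout' : ofin C.output = f (x2 + t + k * Δ) := hout
    have hYeq : (o (x2 + t) + wm k) C.output = f (x2 + t) + k * s := by
      rw [Pi.add_apply, hwm, ho_out (x2 + t), hs]
    rw [← hout', ← hYeq]
    exact hge
  have hmonof := f_mono hSC hOb
  have hper : ∀ t, ∃ K, ∀ k, K ≤ k → f (x2 + t + (k + 1) * Δ) = f (x2 + t + k * Δ) + s := by
    intro t
    obtain ⟨q, hq⟩ : ∃ q' : ℕ → ℕ, ∀ k, q' k = f (x2 + t + k * Δ) := ⟨_, fun _ => rfl⟩
    have hstep : ∀ k, q k + s ≤ q (k + 1) := by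
      intro k
      have h7 := hlow (t + k * Δ) 1
      have e1 : x2 + (t + k * Δ) = x2 + t + k * Δ := by ring
      have e2 : x2 + (t + k * Δ) + 1 * Δ = x2 + t + (k + 1) * Δ := by ring
      rw [e2, e1, one_mul] at h7
      rw [hq, hq]
      exact h7
    have hq_ge0 : ∀ k, k * s ≤ q k := by
      intro k
      induction k with
      | zero => omega
      | succ k ih =>
        have h7 := hstep k
        have e : (k + 1) * s = k * s + s := by ring
        omega
    have hbd : ∀ k, q k ≤ f x2 + (t / Δ + 1) * s + k * s := by
      intro k
      have h1 : t ≤ t / Δ * Δ + Δ := by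
        conv_lhs => rw [← Nat.div_add_mod t Δ]
        rw [Nat.mul_comm]
        exact Nat.add_le_add_left (le_of_lt (Nat.mod_lt t hΔ)) _
      have hle1 : x2 + t + k * Δ ≤ x2 + (t / Δ + 1 + k) * Δ := by
        have e : (t / Δ + 1 + k) * Δ = t / Δ * Δ + Δ + k * Δ := by ring
        rw [e]
        omega
      have h2 : q k ≤ f x2 + (t / Δ + 1 + k) * s := by
        rw [hq]
        calc f (x2 + t + k * Δ) ≤ f (x2 + (t / Δ + 1 + k) * Δ) := hmonof hle1
          _ = f x2 + (t / Δ + 1 + k) * s := hexact _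
      have e : (t / Δ + 1 + k) * s = (t / Δ + 1) * s + k * s := by ring
      omega
    obtain ⟨K, hK⟩ := mono_bdd_ev_const (fun k => q k - k * s)
      (by
        intro k l hkl
        show q k - k * s ≤ q l - l * s
        induction l with
        | zero =>
          have hk0 : k = 0 := by omega
          rw [hk0]
        | succ l ih =>
          rcases Nat.lt_or_ge k (l + 1) with hlt | hge
          · have h7 := hstep l
            have h8 := hq_ge0 l
            have h9 := ih (by omega)
            have e : (l + 1) * s = l * s + s := by ring
            omega
          · have hkeq : k = l + 1 := by omega
            rw [hkeq])
      (f x2 + (t / Δ + 1) * s)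
      (by
        intro k
        show q k - k * s ≤ f x2 + (t / Δ + 1) * s
        have := hbd k
        omega)
    refine ⟨K, fun k hk => ?_⟩
    have h1 : q k - k * s = q K - K * s := hK k hk
    have h2 : q (k + 1) - (k + 1) * s = q K - K * s := hK (k + 1) (by omega)
    have h3 := hq_ge0 k
    have h4 := hq_ge0 (k + 1)
    have e : (k + 1) * s = k * s + s := by ring
    have goal' : q (k + 1) = q k + s := by omega
    rw [← hq, ← hq]
    exact goal'
  choose K hK using hper
  refine ⟨x2 + Δ + (Finset.range Δ).sup (fun u => u + K u * Δ), Δ, s, hΔ, ?_⟩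
  intro x hx
  have hdm := Nat.div_add_mod (x - x2) Δ
  have hmod := Nat.mod_lt (x - x2) hΔ
  set t := (x - x2) % Δ with htdef
  set k := (x - x2) / Δ with hkdef
  have hx2le : x2 ≤ x := by omega
  have emul : Δ * k = k * Δ := by ring
  have hxeq : x = x2 + t + k * Δ := by omega
  have hsup : t + K t * Δ ≤ (Finset.range Δ).sup (fun u => u + K u * Δ) :=
    Finset.le_sup (f := fun u => u + K u * Δ) (Finset.mem_range.mpr hmod)
  have hkK : K t ≤ k := by
    by_contra hno
    push_neg at hno
    have h7 : k + 1 ≤ K t := hno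
    have h8 : (k + 1) * Δ ≤ K t * Δ := Nat.mul_le_mul_right Δ h7
    have e : (k + 1) * Δ = k * Δ + Δ := by ring
    omega
  have h9 := hK t k hkK
  have e1 : x + Δ = x2 + t + (k + 1) * Δ := by
    have e : (k + 1) * Δ = k * Δ + Δ := by ring
    omega
  rw [e1, h9, hxeq]

end Pump
section NormalToSemilinear

theorem semilinear_singleton (j : ℕ) : SemilinearSet 1 {x : Fin 1 → ℕ | x 0 = j} := by
  have h3 := SemilinearSet.inter (SemilinearSet.threshold (d := 1) (fun _ => 1) (j : ℤ))
    (SemilinearSet.compl (SemilinearSet.threshold (d := 1) (fun _ => 1) ((j : ℤ) + 1)))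
  have e : {x : Fin 1 → ℕ | (j : ℤ) ≤ ∑ i, 1 * (x i : ℤ)} ∩
      {x : Fin 1 → ℕ | (j : ℤ) + 1 ≤ ∑ i, 1 * (x i : ℤ)}ᶜ = {x : Fin 1 → ℕ | x 0 = j} := by
    ext x
    simp only [Set.mem_inter_iff, Set.mem_compl_iff, Set.mem_setOf_eq, Fin.sum_univ_one, one_mul,
      not_le]
    omega
  rw [← e]
  exact h3

theorem semilinear_class (N r Δ : ℕ) (hΔ : 0 < Δ) :
    SemilinearSet 1 {x : Fin 1 → ℕ | N ≤ x 0 ∧ ((x 0 : ℤ)) ≡ (r : ℤ) [ZMOD ((Δ : ℕ) : ℤ)]} := by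
  have h3 := SemilinearSet.inter (SemilinearSet.threshold (d := 1) (fun _ => 1) (N : ℤ))
    (SemilinearSet.mod (d := 1) (fun _ => 1) (r : ℤ) Δ hΔ)
  have e : {x : Fin 1 → ℕ | (N : ℤ) ≤ ∑ i, 1 * (x i : ℤ)} ∩
      {x : Fin 1 → ℕ | (∑ i, 1 * (x i : ℤ)) ≡ (r : ℤ) [ZMOD ((Δ : ℕ) : ℤ)]} =
      {x : Fin 1 → ℕ | N ≤ x 0 ∧ ((x 0 : ℤ)) ≡ (r : ℤ) [ZMOD ((Δ : ℕ) : ℤ)]} := by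
    ext x
    simp only [Set.mem_inter_iff, Set.mem_setOf_eq, Fin.sum_univ_one, one_mul]
    constructor
    · rintro ⟨h1, h2⟩
      exact ⟨by exact_mod_cast h1, h2⟩
    · rintro ⟨h1, h2⟩
      exact ⟨by exact_mod_cast h1, h2⟩
  rw [← e]
  exact h3

theorem normal_to_semilinear (f : ℕ → ℕ) (N Δ s : ℕ) (hΔ : 0 < Δ)
    (hper : ∀ x, N ≤ x → f (x + Δ) = f x + s) :
    SemilinearFn (fun x : Fin 1 → ℕ => f (x 0)) := by
  classical
  -- iterated periodicity
  have hiter : ∀ (y m : ℕ), N ≤ y → f (y + m * Δ) = f y + m * s := by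
    intro y m hy
    induction m with
    | zero => simp
    | succ m ih =>
      have e1 : y + (m + 1) * Δ = (y + m * Δ) + Δ := by ring
      have e2 : (m + 1) * s = m * s + s := by ring
      rw [e1, hper (y + m * Δ) (by omega), ih, e2]
      ring
  refine ⟨N + Δ,
    (fun k => if (k : ℕ) < N then {x | x 0 = (k : ℕ)}
      else {x | N ≤ x 0 ∧ ((x 0 : ℤ)) ≡ ((k : ℕ) : ℤ) [ZMOD ((Δ : ℕ) : ℤ)]}),
    (fun k => if (k : ℕ) < N then (fun _ => 0) else (fun _ => (s : ℚ) / (Δ : ℚ))),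
    (fun k => if (k : ℕ) < N then (f (k : ℕ) : ℚ)
      else (f (k : ℕ) : ℚ) - ((s : ℚ) / (Δ : ℚ)) * ((k : ℕ) : ℚ)),
    ?_, ?_, ?_, ?_⟩
  · intro k
    by_cases hk : (k : ℕ) < N
    · simp only [hk, if_true]
      exact semilinear_singleton _
    · simp only [hk, if_false]
      exact semilinear_class _ _ _ hΔ
  · -- disjointness
    intro k l hkl
    ext x
    simp only [Set.mem_inter_iff, Set.mem_empty_iff_false, iff_false]
    rintro ⟨hxk, hxl⟩
    by_cases hk : (k : ℕ) < N <;> by_cases hl : (l : ℕ) < N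
    · simp only [hk, if_true, Set.mem_setOf_eq] at hxk
      simp only [hl, if_true, Set.mem_setOf_eq] at hxl
      exact hkl (Fin.ext (by omega))
    · simp only [hk, if_true, Set.mem_setOf_eq] at hxk
      simp only [hl, if_false, Set.mem_setOf_eq] at hxl
      omega
    · simp only [hk, if_false, Set.mem_setOf_eq] at hxk
      simp only [hl, if_true, Set.mem_setOf_eq] at hxl
      omega
    · simp only [hk, if_false, Set.mem_setOf_eq] at hxk
      simp only [hl, if_false, Set.mem_setOf_eq] at hxl
      apply hkl
      have hd := (hxk.2.symm.trans hxl.2).dvd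
      have hbk : N ≤ (k : ℕ) := by omega
      have hbl : N ≤ (l : ℕ) := by omega
      have hk2 : (k : ℕ) < N + Δ := k.2
      have hl2 : (l : ℕ) < N + Δ := l.2
      obtain ⟨j, hj⟩ := hd
      have hjz : j = 0 := by
        rcases lt_trichotomy j 0 with hj0 | hj0 | hj0
        · have h1 : ((l : ℕ) : ℤ) - ((k : ℕ) : ℤ) ≤ (Δ : ℤ) * (-1) := by
            rw [hj]
            apply mul_le_mul_of_nonneg_left _ (by positivity)
            omega
          omega
        · exact hj0
        · have h1 : (Δ : ℤ) * 1 ≤ ((l : ℕ) : ℤ) - ((k : ℕ) : ℤ) := by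
            rw [hj]
            apply mul_le_mul_of_nonneg_left _ (by positivity)
            omega
          omega
      rw [hjz, mul_zero] at hj
      have : (k : ℕ) = (l : ℕ) := by omega
      exact Fin.ext this
  · -- covering
    intro x
    by_cases hx : x 0 < N
    · refine ⟨⟨x 0, by omega⟩, ?_⟩
      simp only [hx, if_true, Set.mem_setOf_eq]
    · refine ⟨⟨N + (x 0 - N) % Δ, by
        have := Nat.mod_lt (x 0 - N) hΔ
        omega⟩, ?_⟩
      have hnlt : ¬ (N + (x 0 - N) % Δ < N) := by omega
      simp only [hnlt, if_false, Set.mem_setOf_eq]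
      refine ⟨by omega, ?_⟩
      have hdm := Nat.div_add_mod (x 0 - N) Δ
      have : ((x 0 : ℤ)) - (N + (x 0 - N) % Δ : ℕ) = (Δ : ℤ) * ((x 0 - N) / Δ : ℕ) := by
        have e2 : ((x 0 - N : ℕ) : ℤ) =
            (Δ : ℤ) * (((x 0 - N) / Δ : ℕ) : ℤ) + (((x 0 - N) % Δ : ℕ) : ℤ) := by
          exact_mod_cast hdm.symm
        push_cast at e2 ⊢
        omega
      exact Int.ModEq.symm (Int.modEq_iff_dvd.mpr ⟨((x 0 - N) / Δ : ℕ), this⟩)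
  · -- affine values
    intro k x hx
    by_cases hk : (k : ℕ) < N
    · simp only [hk, if_true, Set.mem_setOf_eq] at hx ⊢
      rw [hx]
      simp
    · simp only [hk, if_false, Set.mem_setOf_eq] at hx ⊢
      obtain ⟨hxN, hmod⟩ := hx
      have hk2 : (k : ℕ) < N + Δ := k.2
      have hd := hmod.dvd
      obtain ⟨j, hj⟩ := hd
      -- x 0 = k + m * Δ with m = j ≥ 0... here k - x0 = Δ * j, so x0 = k - Δ j, need j ≤ 0
      have hjn : j ≤ 0 := by
        by_contra hpos
        push_neg at hpos
        have h1 : (Δ : ℤ) * 1 ≤ (Δ : ℤ) * j := by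
          apply mul_le_mul_of_nonneg_left _ (by positivity)
          omega
        omega
      obtain ⟨m, hm⟩ : ∃ m : ℕ, (m : ℤ) = -j := ⟨(-j).toNat, by omega⟩
      have hx0 : x 0 = (k : ℕ) + m * Δ := by
        have : ((x 0 : ℕ) : ℤ) = ((k : ℕ) : ℤ) + (m : ℤ) * (Δ : ℤ) := by
          rw [hm]
          have : (Δ:ℤ) * j = ((k:ℕ):ℤ) - ((x 0 : ℕ):ℤ) := hj.symm
          linarith
        exact_mod_cast this
      simp only [Fin.sum_univ_one]
      rw [hx0, hiter (k : ℕ) m (by omega)]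
      have hΔQ : (Δ : ℚ) ≠ 0 := by positivity
      push_cast
      field_simp
      ring

end NormalToSemilinear
section SemilinearToNormal

/-- the diagonal embedding of ℕ into `Fin 1 → ℕ` -/
def epts (n : ℕ) : Fin 1 → ℕ := fun _ => n

theorem period_iter {p : ℕ → Prop} {N P : ℕ} (h : ∀ x, N ≤ x → (p x ↔ p (x + P))) :
    ∀ x, N ≤ x → ∀ k, (p x ↔ p (x + k * P)) := by
  intro x hx k
  induction k with
  | zero => simp
  | succ k ih =>
    have e : x + (k + 1) * P = (x + k * P) + P := by ring
    rw [e]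
    exact ih.trans (h (x + k * P) (by omega))

theorem semilinearSet_evper {A : Set (Fin 1 → ℕ)} (hA : SemilinearSet 1 A) :
    ∃ N P : ℕ, 0 < P ∧ ∀ x, N ≤ x → (epts x ∈ A ↔ epts (x + P) ∈ A) := by
  induction hA with
  | threshold a b =>
    rcases lt_trichotomy (a 0) 0 with ha | ha | ha
    · refine ⟨(1 - b).toNat, 1, by omega, ?_⟩
      intro x hx
      have hb : 1 - b ≤ (x : ℤ) := by
        have : ((1 - b).toNat : ℤ) ≤ (x : ℤ) := by exact_mod_cast hx
        omega
      have key : ∀ y : ℕ, x ≤ y → ¬ (epts y ∈ {x | b ≤ ∑ i, a i * (x i : ℤ)}) := by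
        intro y hy
        simp only [Set.mem_setOf_eq, Fin.sum_univ_one, epts, not_le]
        have h1 : a 0 * (y : ℤ) ≤ (-1) * y := by
          apply mul_le_mul_of_nonneg_right _ (by positivity)
          omega
        have h2 : (x : ℤ) ≤ (y : ℤ) := by exact_mod_cast hy
        omega
      constructor
      · intro h; exact absurd h (key x (le_refl x))
      · intro h; exact absurd h (key (x + 1) (by omega))
    · refine ⟨0, 1, by omega, ?_⟩
      intro x _
      simp only [Set.mem_setOf_eq, Fin.sum_univ_one, epts, ha, zero_mul]
    · refine ⟨b.toNat, 1, by omega, ?_⟩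
      intro x hx
      have hb : b ≤ (x : ℤ) := by
        have : (b.toNat : ℤ) ≤ (x : ℤ) := by exact_mod_cast hx
        omega
      have key : ∀ y : ℕ, x ≤ y → (epts y ∈ {x | b ≤ ∑ i, a i * (x i : ℤ)}) := by
        intro y hy
        simp only [Set.mem_setOf_eq, Fin.sum_univ_one, epts]
        have h1 : 1 * (y : ℤ) ≤ a 0 * y := by
          apply mul_le_mul_of_nonneg_right _ (by positivity)
          omega
        have h2 : (x : ℤ) ≤ (y : ℤ) := by exact_mod_cast hy
        omega
      constructor
      · intro _; exact key (x + 1) (by omega)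
      · intro _; exact key x (le_refl x)
  | mod a b c hc =>
    refine ⟨0, c, hc, ?_⟩
    intro x _
    simp only [Set.mem_setOf_eq, Fin.sum_univ_one, epts]
    have hmod : a 0 * ((x : ℤ) + c) ≡ a 0 * x [ZMOD (c : ℤ)] := by
      apply Int.ModEq.symm
      apply Int.modEq_iff_dvd.mpr
      exact ⟨a 0, by ring⟩
    constructor
    · intro h
      have e : ((x + c : ℕ) : ℤ) = (x : ℤ) + c := by push_cast; ring
      rw [e]
      exact hmod.trans h
    · intro h
      have e : ((x + c : ℕ) : ℤ) = (x : ℤ) + c := by push_cast; ring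
      rw [e] at h
      exact hmod.symm.trans h
  | union hA hB ihA ihB =>
    obtain ⟨N1, P1, hP1, h1⟩ := ihA
    obtain ⟨N2, P2, hP2, h2⟩ := ihB
    refine ⟨max N1 N2, P1 * P2, by positivity, ?_⟩
    intro x hx
    have k1 := period_iter h1 x (by omega) P2
    have k2 := period_iter h2 x (by omega) P1
    rw [Nat.mul_comm P2 P1] at k1
    exact or_congr k1 k2
  | inter hA hB ihA ihB =>
    obtain ⟨N1, P1, hP1, h1⟩ := ihA
    obtain ⟨N2, P2, hP2, h2⟩ := ihB
    refine ⟨max N1 N2, P1 * P2, by positivity, ?_⟩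
    intro x hx
    have k1 := period_iter h1 x (by omega) P2
    have k2 := period_iter h2 x (by omega) P1
    rw [Nat.mul_comm P2 P1] at k1
    exact and_congr k1 k2
  | compl hA ihA =>
    obtain ⟨N1, P1, hP1, h1⟩ := ihA
    exact ⟨N1, P1, hP1, fun x hx => not_congr (h1 x hx)⟩

theorem semilinear_to_normal (f : ℕ → ℕ)
    (hf : SemilinearFn (fun x : Fin 1 → ℕ => f (x 0))) (hmono : Monotone f) :
    ∃ N Δ s : ℕ, 0 < Δ ∧ ∀ x, N ≤ x → f (x + Δ) = f x + s := by
  classical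
  obtain ⟨m, dom, grad, b, hdomsl, hdisj, hcover, haff⟩ := hf
  have hevp : ∀ k, ∃ N P : ℕ, 0 < P ∧ ∀ x, N ≤ x → (epts x ∈ dom k ↔ epts (x + P) ∈ dom k) :=
    fun k => semilinearSet_evper (hdomsl k)
  choose Nf Pf hPf hper using hevp
  obtain ⟨NN, hNN⟩ : ∃ NN : ℕ, ∀ k, Nf k ≤ NN := ⟨Finset.univ.sup Nf,
    fun k => Finset.le_sup (Finset.mem_univ k)⟩
  obtain ⟨P, hPpos, hPk⟩ : ∃ P : ℕ, 0 < P ∧ ∀ k, ∃ Q, P = Pf k * Q := by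
    refine ⟨Finset.univ.prod Pf, Finset.prod_pos (fun k _ => hPf k), fun k => ?_⟩
    exact ⟨(Finset.univ.erase k).prod Pf, (Finset.mul_prod_erase _ _ (Finset.mem_univ k)).symm⟩
  -- every domain is P-periodic beyond NN
  have hperP : ∀ k x, NN ≤ x → (epts x ∈ dom k ↔ epts (x + P) ∈ dom k) := by
    intro k x hx
    obtain ⟨Q, hQ⟩ := hPk k
    have h2 := period_iter (hper k) x (le_trans (hNN k) hx) Q
    rw [Nat.mul_comm Q (Pf k), ← hQ] at h2
    exact h2
  have hkx : ∀ x : ℕ, ∃ k, epts x ∈ dom k := fun x => hcover (epts x)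
  choose kf hkf using hkx
  have hval : ∀ (k : Fin m) (x : ℕ), epts x ∈ dom k →
      (f x : ℚ) = grad k 0 * (x : ℚ) + b k := by
    intro k x hk
    have h3 := haff k (epts x) hk
    simpa [Fin.sum_univ_one, epts] using h3
  have huniq : ∀ (k : Fin m) (y : ℕ), epts y ∈ dom k → k = kf y := by
    intro k y h
    by_contra hne
    have hmem : epts y ∈ dom k ∩ dom (kf y) := ⟨h, hkf y⟩
    rw [hdisj k (kf y) hne] at hmem
    exact hmem
  have hmem1 : ∀ x, NN ≤ x → epts (x + P) ∈ dom (kf x) :=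
    fun x hx => (hperP (kf x) x hx).mp (hkf x)
  have hkfP : ∀ x, NN ≤ x → kf (x + P) = kf x :=
    fun x hx => (huniq (kf x) (x + P) (hmem1 x hx)).symm
  have hinc : ∀ x, NN ≤ x → (f (x + P) : ℚ) = (f x : ℚ) + grad (kf x) 0 * P := by
    intro x hx
    have v1 := hval (kf x) x (hkf x)
    have v2 := hval (kf x) (x + P) (hmem1 x hx)
    rw [v1] at *
    rw [v2]
    push_cast
    ring
  have hDD : ∀ x, NN ≤ x → f (x + P) + f (x + P) = f x + f (x + P + P) := by
    intro x hx
    have i1 := hinc x hx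
    have i2 := hinc (x + P) (by omega)
    rw [hkfP x hx] at i2
    have hq : (f (x + P) : ℚ) + f (x + P) = (f x : ℚ) + f (x + P + P) := by
      linarith [i1, i2]
    exact_mod_cast hq
  have hE : ∀ z, NN ≤ z → ∀ j, f (z + (j + 1) * P) + f z = f (z + j * P) + f (z + P) := by
    intro z hz j
    induction j with
    | zero =>
      have a1 : z + 1 * P = z + P := by ring
      have a2 : z + 0 * P = z := by ring
      rw [a1, a2]
      omega
    | succ j ih =>
      have h0 := hDD (z + j * P) (by omega)
      have a1 : z + j * P + P = z + (j + 1) * P := by ring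
      rw [a1] at h0
      have a2 : z + (j + 1) * P + P = z + (j + 1 + 1) * P := by ring
      rw [a2] at h0
      omega
  have hC : ∀ z, NN ≤ z → ∀ j, f (z + j * P) + j * f z = f z + j * f (z + P) := by
    intro z hz j
    induction j with
    | zero => simp
    | succ j ih =>
      have hEj := hE z hz j
      have e1 : (j + 1) * f z = j * f z + f z := by ring
      have e2 : (j + 1) * f (z + P) = j * f (z + P) + f (z + P) := by ring
      omega
  have claim : ∀ x, NN ≤ x → f (x + P) + f (x + 1) = f x + f (x + 1 + P) := by
    intro x hx
    have M2 : ∀ j : ℕ, f (x + 1 + j * P) ≤ f (x + (j + 1) * P) := by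
      intro j
      apply hmono
      have e : x + (j + 1) * P = x + j * P + P := by ring
      omega
    have M1 : ∀ j : ℕ, f (x + j * P) ≤ f (x + 1 + j * P) := by
      intro j
      apply hmono
      omega
    by_contra hne
    obtain ⟨j0, hj0⟩ : ∃ j0 : ℕ, j0 = f x + f (x + P) + f (x + 1) + f (x + 1 + P) + 1 :=
      ⟨_, rfl⟩
    rcases Nat.lt_or_ge (f (x + P) + f (x + 1)) (f x + f (x + 1 + P)) with hlt | hge
    · have c1 := hC x hx (j0 + 1)
      have c2 := hC (x + 1) (by omega) j0
      have m2 := M2 j0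
      have hmul : j0 * (f (x + P) + f (x + 1) + 1) ≤ j0 * (f x + f (x + 1 + P)) :=
        Nat.mul_le_mul_left j0 (by omega)
      have e1 : (j0 + 1) * f x = j0 * f x + f x := by ring
      have e2 : (j0 + 1) * f (x + P) = j0 * f (x + P) + f (x + P) := by ring
      have e3 : j0 * (f (x + P) + f (x + 1) + 1) =
          j0 * f (x + P) + j0 * f (x + 1) + j0 := by ring
      have e4 : j0 * (f x + f (x + 1 + P)) = j0 * f x + j0 * f (x + 1 + P) := by ring
      omega
    · have hgt : f x + f (x + 1 + P) < f (x + P) + f (x + 1) := by omega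
      have c1 := hC x hx j0
      have c2 := hC (x + 1) (by omega) j0
      have m1 := M1 j0
      have hmul : j0 * (f x + f (x + 1 + P) + 1) ≤ j0 * (f (x + P) + f (x + 1)) :=
        Nat.mul_le_mul_left j0 (by omega)
      have e3 : j0 * (f x + f (x + 1 + P) + 1) =
          j0 * f x + j0 * f (x + 1 + P) + j0 := by ring
      have e4 : j0 * (f (x + P) + f (x + 1)) = j0 * f (x + P) + j0 * f (x + 1) := by ring
      omega
  have hDconst : ∀ y : ℕ, f ((NN + y) + P) + f NN = f (NN + y) + f (NN + P) := by
    intro y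
    induction y with
    | zero => simp [Nat.add_comm]
    | succ y ih =>
      have hcl := claim (NN + y) (by omega)
      have e1 : NN + y + 1 = NN + (y + 1) := by ring
      rw [e1] at hcl
      omega
  refine ⟨NN, P, f (NN + P) - f NN, hPpos, ?_⟩
  intro x hx
  have h0 := hDconst (x - NN)
  have e1 : NN + (x - NN) = x := by omega
  rw [e1] at h0
  have hm : f NN ≤ f (NN + P) := hmono (by omega)
  omega

end SemilinearToNormal
section Construction

variable (f : ℕ → ℕ) (N P : ℕ)

/-- state transition: absorb one more input token -/
def trf (i : ℕ) : ℕ := if i + 1 < N + P then i + 1 else N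

/-- state after absorbing `c` tokens -/
def phif : ℕ → ℕ
  | 0 => 0
  | c + 1 => trf N P (phif c)

/-- emission when absorbing the token that moves the state out of `i` -/
def delf (i : ℕ) : ℕ := f (i + 1) - f i

def vX (k : ℕ) : Fin (N + P + 3) → ℕ := fun t => if (t : ℕ) = 0 then k else 0
def vL : Fin (N + P + 3) → ℕ := fun t => if (t : ℕ) = 1 then 1 else 0
def vY (k : ℕ) : Fin (N + P + 3) → ℕ := fun t => if (t : ℕ) = 2 then k else 0
def vA (i : ℕ) : Fin (N + P + 3) → ℕ := fun t => if (t : ℕ) = 3 + i then 1 else 0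

def rz : (Fin (N + P + 3) → ℕ) × (Fin (N + P + 3) → ℕ) :=
  (vL N P, vA N P 0 + vY N P (f 0))

def ra (i : ℕ) : (Fin (N + P + 3) → ℕ) × (Fin (N + P + 3) → ℕ) :=
  (vA N P i + vX N P 1, vA N P (trf N P i) + vY N P (delf f i))

noncomputable def theCRN : CRN 1 (Fin (N + P + 3)) where
  reactions := insert (rz f N P) ((Finset.range (N + P)).image (ra f N P))
  inputs := fun _ => ⟨0, by omega⟩
  output := ⟨2, by omega⟩
  leader := ⟨1, by omega⟩
  inputs_inj := fun a b _ => Subsingleton.elim a b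
  leader_not_input := fun i => by simp [Fin.ext_iff]

/-- the configuration after the leader has converted and `k` inputs are absorbed,
on input `x` -/
def cfg (x k : ℕ) : Fin (N + P + 3) → ℕ :=
  vX N P (x - k) + vA N P (phif N P k) + vY N P (f k)

theorem phif_lt (hP : 0 < P) : ∀ k, phif N P k < N + P := by
  intro k
  induction k with
  | zero => simp [phif]; omega
  | succ k ih =>
    show trf N P (phif N P k) < N + P
    unfold trf
    split_ifs <;> omega

theorem phif_spec (hP : 0 < P) :
    ∀ k, ∃ j, k = phif N P k + j * P ∧ (j = 0 ∨ N ≤ phif N P k) := by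
  intro k
  induction k with
  | zero => exact ⟨0, by simp [phif]⟩
  | succ k ih =>
    obtain ⟨j, hj1, hj2⟩ := ih
    show ∃ j', k + 1 = trf N P (phif N P k) + j' * P ∧ (j' = 0 ∨ N ≤ trf N P (phif N P k))
    unfold trf
    split_ifs with h
    · exact ⟨j, by omega, by omega⟩
    · -- phif k + 1 = N + P
      have hlt := phif_lt N P hP k
      refine ⟨j + 1, by
        have e : (j + 1) * P = j * P + P := by ring
        omega, by omega⟩

end Construction
section Construction2

variable (f : ℕ → ℕ) (N P : ℕ)

theorem f_iter (s : ℕ) (hper : ∀ x, N ≤ x → f (x + P) = f x + s) :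
    ∀ y j, N ≤ y → f (y + j * P) = f y + j * s := by
  intro y j hy
  induction j with
  | zero => simp
  | succ j ih =>
    have e1 : y + (j + 1) * P = (y + j * P) + P := by ring
    have e2 : (j + 1) * s = j * s + s := by ring
    rw [e1, hper (y + j * P) (by omega), ih, e2]
    ring

theorem f_step_phif (s : ℕ) (hmono : Monotone f) (hP : 0 < P)
    (hper : ∀ x, N ≤ x → f (x + P) = f x + s) :
    ∀ k, f (k + 1) = f k + delf f (phif N P k) := by
  intro k
  obtain ⟨j, hj1, hj2⟩ := phif_spec N P hP k
  unfold delf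
  rcases hj2 with hj0 | hjN
  · subst hj0
    simp only [zero_mul, add_zero] at hj1
    rw [← hj1]
    have := hmono (by omega : k ≤ k + 1)
    omega
  · obtain ⟨φ, hφ⟩ : ∃ φ', phif N P k = φ' := ⟨_, rfl⟩
    rw [hφ] at hj1 hjN ⊢
    have h1 := f_iter f N P s hper φ j hjN
    have h2 := f_iter f N P s hper (φ + 1) j (by omega)
    have g1 : f k = f (φ + j * P) := by rw [← hj1]
    have g2 : f (k + 1) = f (φ + 1 + j * P) := by
      rw [(by omega : k + 1 = φ + 1 + j * P)]
    have := hmono (by omega : φ ≤ φ + 1)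
    omega

theorem mem_reactions {rp : (Fin (N + P + 3) → ℕ) × (Fin (N + P + 3) → ℕ)} :
    rp ∈ (theCRN f N P).reactions ↔ rp = rz f N P ∨ ∃ i < N + P, rp = ra f N P i := by
  show rp ∈ insert (rz f N P) ((Finset.range (N + P)).image (ra f N P)) ↔ _
  simp only [Finset.mem_insert, Finset.mem_image, Finset.mem_range]
  constructor
  · rintro (h | ⟨i, hi, he⟩)
    · exact Or.inl h
    · exact Or.inr ⟨i, hi, he.symm⟩
  · rintro (h | ⟨i, hi, he⟩)
    · exact Or.inl h
    · exact Or.inr ⟨i, hi, he.symm⟩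

theorem init_eq (x : ℕ) :
    (theCRN f N P).init (fun _ => x) = vX N P x + vL N P := by
  funext t
  show (∑ i : Fin 1, if (theCRN f N P).inputs i = t then x else 0) +
      (if t = (theCRN f N P).leader then 1 else 0) = _
  simp only [Fin.sum_univ_one, theCRN, vX, vL, Pi.add_apply, Fin.ext_iff]
  split_ifs <;> simp_all <;> omega

theorem step_init (x : ℕ) {c' : Fin (N + P + 3) → ℕ}
    (h : (theCRN f N P).Step ((theCRN f N P).init (fun _ => x)) c') :
    c' = cfg f N P x 0 := by
  obtain ⟨rp, hmem, hle, heq⟩ := h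
  rw [init_eq] at hle heq
  rcases (mem_reactions f N P).mp hmem with h0 | ⟨i, hi, hr⟩
  · subst h0
    rw [heq]
    funext t
    simp only [rz, cfg, phif, vX, vL, vA, vY, Pi.add_apply, Pi.sub_apply]
    split_ifs <;> omega
  · subst hr
    exfalso
    have h1 := hle ⟨3 + i, by omega⟩
    simp only [ra, vA, vX, vL, Pi.add_apply] at h1
    split_ifs at h1 <;> omega

end Construction2
section Construction3

variable (f : ℕ → ℕ) (N P : ℕ)

theorem cfg_le (x k : ℕ) (hkx : k < x) :
    (ra f N P (phif N P k)).1 ≤ cfg f N P x k := by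
  intro t
  simp only [ra, cfg, vX, vL, vA, vY, Pi.add_apply]
  split_ifs <;> omega

theorem cfg_succ_eq (s : ℕ) (hmono : Monotone f) (hP : 0 < P)
    (hper : ∀ x, N ≤ x → f (x + P) = f x + s) (x k : ℕ) (hkx : k < x) :
    cfg f N P x (k + 1) =
      cfg f N P x k - (ra f N P (phif N P k)).1 + (ra f N P (phif N P k)).2 := by
  funext t
  have hstep := f_step_phif f N P s hmono hP hper k
  have hφ := phif_lt N P hP k
  have htr : phif N P (k + 1) = trf N P (phif N P k) := rfl
  have htrlt := phif_lt N P hP (k + 1)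
  rw [htr] at htrlt
  simp only [ra, cfg, vX, vL, vA, vY, Pi.add_apply, Pi.sub_apply, htr]
  split_ifs <;> omega

theorem step_cfg (s : ℕ) (hmono : Monotone f) (hP : 0 < P)
    (hper : ∀ x, N ≤ x → f (x + P) = f x + s) (x k : ℕ) (hk : k ≤ x)
    {c' : Fin (N + P + 3) → ℕ}
    (h : (theCRN f N P).Step (cfg f N P x k) c') : k < x ∧ c' = cfg f N P x (k + 1) := by
  obtain ⟨rp, hmem, hle, heq⟩ := h
  have hφ := phif_lt N P hP k
  rcases (mem_reactions f N P).mp hmem with h0 | ⟨i, hi, hr⟩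
  · subst h0
    exfalso
    have h1 := hle ⟨1, by omega⟩
    simp only [rz, cfg, vX, vL, vA, vY, Pi.add_apply] at h1
    norm_num at h1
    split_ifs at h1 <;> omega
  · subst hr
    have h1 := hle ⟨3 + i, by omega⟩
    have h2 := hle ⟨0, by omega⟩
    simp only [ra, cfg, vX, vL, vA, vY, Pi.add_apply] at h1 h2
    norm_num at h1 h2
    have hieq : i = phif N P k := by split_ifs at h1 <;> omega
    have hkx : k < x := by split_ifs at h2 <;> omega
    subst hieq
    refine ⟨hkx, ?_⟩
    rw [heq, cfg_succ_eq f N P s hmono hP hper x k hkx]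
  
theorem no_step_final (hP : 0 < P) (x : ℕ) :
    ∀ rp ∈ (theCRN f N P).reactions, ¬ rp.1 ≤ cfg f N P x x := by
  intro rp hmem hle
  have hφ := phif_lt N P hP x
  rcases (mem_reactions f N P).mp hmem with h0 | ⟨i, hi, hr⟩
  · subst h0
    have h1 := hle ⟨1, by omega⟩
    simp only [rz, cfg, vX, vL, vA, vY, Pi.add_apply] at h1
    norm_num at h1
    split_ifs at h1 <;> omega
  · subst hr
    have h2 := hle ⟨0, by omega⟩
    simp only [ra, cfg, vX, vL, vA, vY, Pi.add_apply] at h2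
    norm_num at h2
    split_ifs at h2 <;> omega

theorem stable_final (hP : 0 < P) (x : ℕ) : (theCRN f N P).Stable (cfg f N P x x) := by
  intro c' hreach
  have he : c' = cfg f N P x x := by
    induction hreach with
    | refl => rfl
    | tail hab hstep ih =>
      rw [ih] at hstep
      obtain ⟨rp, hmem, hle, _⟩ := hstep
      exact absurd hle (no_step_final f N P hP x rp hmem)
  rw [he]

theorem reach_tail (s : ℕ) (hmono : Monotone f) (hP : 0 < P)
    (hper : ∀ x, N ≤ x → f (x + P) = f x + s) (x : ℕ) :
    ∀ j k, k ≤ x → x - k = j → (theCRN f N P).Reachable (cfg f N P x k) (cfg f N P x x) := by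
  intro j
  induction j with
  | zero =>
    intro k hk hj
    have : k = x := by omega
    rw [this]
    exact Relation.ReflTransGen.refl
  | succ j ih =>
    intro k hk hj
    have hkx : k < x := by omega
    have hstep : (theCRN f N P).Step (cfg f N P x k) (cfg f N P x (k + 1)) := by
      refine ⟨ra f N P (phif N P k), ?_, cfg_le f N P x k hkx, ?_⟩
      · exact (mem_reactions f N P).mpr (Or.inr ⟨phif N P k, phif_lt N P hP k, rfl⟩)
      · exact cfg_succ_eq f N P s hmono hP hper x k hkx
    exact Relation.ReflTransGen.head hstep (ih (k + 1) (by omega) (by omega))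

theorem step_init_exists (x : ℕ) :
    (theCRN f N P).Step ((theCRN f N P).init (fun _ => x)) (cfg f N P x 0) := by
  refine ⟨rz f N P, Finset.mem_insert_self _ _, ?_, ?_⟩
  · rw [init_eq]
    intro t
    simp only [rz, vX, vL, Pi.add_apply]
    split_ifs <;> omega
  · rw [init_eq]
    funext t
    simp only [rz, cfg, phif, vX, vL, vA, vY, Pi.add_apply, Pi.sub_apply]
    split_ifs <;> omega

theorem reach_good (s : ℕ) (hmono : Monotone f) (hP : 0 < P)
    (hper : ∀ x, N ≤ x → f (x + P) = f x + s) (x : ℕ) {c : Fin (N + P + 3) → ℕ}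
    (h : (theCRN f N P).Reachable ((theCRN f N P).init (fun _ => x)) c) :
    c = (theCRN f N P).init (fun _ => x) ∨ ∃ k ≤ x, c = cfg f N P x k := by
  induction h with
  | refl => exact Or.inl rfl
  | tail hab hstep ih =>
    rcases ih with h1 | ⟨k, hk, h2⟩
    · rw [h1] at hstep
      exact Or.inr ⟨0, by omega, step_init f N P x hstep⟩
    · rw [h2] at hstep
      obtain ⟨hkx, hc⟩ := step_cfg f N P s hmono hP hper x k hk hstep
      exact Or.inr ⟨k + 1, by omega, hc⟩

theorem normal_to_oblivious (hmono : Monotone f) (hP : 0 < P) (s : ℕ)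
    (hper : ∀ x, N ≤ x → f (x + P) = f x + s) :
    ObliviouslyComputable (fun x : Fin 1 → ℕ => f (x 0)) := by
  refine ⟨N + P + 3, theCRN f N P, ?_, ?_⟩
  · intro rp hmem
    rcases (mem_reactions f N P).mp hmem with h0 | ⟨i, hi, hr⟩
    · subst h0
      show vL N P ⟨2, by omega⟩ = 0
      norm_num [vL]
    · subst hr
      show (vA N P i + vX N P 1) ⟨2, by omega⟩ = 0
      simp only [vA, vX, Pi.add_apply]
      norm_num
      omega
  · intro xv c hreach
    have hxv : xv = (fun _ => xv 0) := funext fun i => by rw [Subsingleton.elim i 0]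
    rw [hxv] at hreach
    have hgood := reach_good f N P s hmono hP hper (xv 0) hreach
    refine ⟨cfg f N P (xv 0) (xv 0), ?_, stable_final f N P hP (xv 0), ?_⟩
    · rcases hgood with h1 | ⟨k, hk, h2⟩
      · rw [h1]
        exact Relation.ReflTransGen.head (step_init_exists f N P (xv 0))
          (reach_tail f N P s hmono hP hper (xv 0) ((xv 0) - 0) 0 (by omega) rfl)
      · rw [h2]
        exact reach_tail f N P s hmono hP hper (xv 0) ((xv 0) - k) k hk rfl
    · show cfg f N P (xv 0) (xv 0) ⟨2, by omega⟩ = f (xv 0)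
      have hφ := phif_lt N P hP (xv 0)
      simp only [cfg, vX, vL, vA, vY, Pi.add_apply]
      norm_num
      omega

end Construction3
/-- A single-input function `f : ℕ → ℕ` is obliviously-computable iff it is
semilinear and nondecreasing. -/
theorem obliviouslyComputable_one_dim_iff (f : ℕ → ℕ) :
    ObliviouslyComputable (fun x : Fin 1 → ℕ => f (x 0)) ↔
      SemilinearFn (fun x : Fin 1 → ℕ => f (x 0)) ∧ Monotone f := by
  constructor
  · rintro ⟨n, C, hOb, hSC⟩
    obtain ⟨N, Δ, s, hΔ, hper⟩ := forward_normal hOb hSC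
    exact ⟨normal_to_semilinear f N Δ s hΔ hper, f_mono hSC hOb⟩
  · rintro ⟨hsl, hmono⟩
    obtain ⟨N, Δ, s, hΔ, hper⟩ := semilinear_to_normal f hsl hmono
    exact normal_to_oblivious f N Δ hmono hΔ s hper
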